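/- In the group algebra ℂ[S_k], the symmetrizer e_k = (1/k!)∑_σ σ factorizes as e_k = (1/k!)(Ř_{k-1}(1)···Ř_1(k−1))···(Ř_{k-1}(1)Ř_{k-2}(2))(Ř_{k-1}(1)), where Ř_i(ξ) = s_i + 1/ξ and s_i is the simple transposition (i,i+1). -/

import Mathlib

/-- The Baxterized element `Ř_i(ξ) = s_i + 1/ξ` of the group algebra `ℂ[S_k]`, where
`s_i` is the simple transposition exchanging the (0-indexed) positions `i` and `i+1`.
(Junk value `1` for out-of-range indices, which never occur below.) -/
noncomputable def Rh (k : ℕ) (i : ℕ) (ξ : ℂ) : MonoidAlgebra ℂ (Equiv.Perm (Fin k)) :=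
  if h : i + 1 < k then
    MonoidAlgebra.single (Equiv.swap ⟨i, by omega⟩ ⟨i + 1, h⟩) 1 + ξ⁻¹ • 1
  else 1

open Equiv Equiv.Perm MonoidAlgebra Finset

/-- embedding of `Perm (Fin n)` into `Perm (Fin (n+1))` fixing `0`. -/
noncomputable def iotaHom (n : ℕ) : Equiv.Perm (Fin n) →* Equiv.Perm (Fin (n+1)) :=
  MonoidHom.mk' (fun σ => Equiv.Perm.decomposeFin.symm (0, σ)) (by
    intro a b
    ext x
    refine Fin.cases ?_ ?_ x
    · simp [Equiv.Perm.decomposeFin_symm_apply_zero]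
    · intro i
      simp [Equiv.Perm.decomposeFin_symm_apply_succ])

lemma iotaHom_apply_zero {n : ℕ} (σ : Equiv.Perm (Fin n)) : iotaHom n σ 0 = 0 := by
  simp [iotaHom, Equiv.Perm.decomposeFin_symm_apply_zero]

lemma iotaHom_apply_succ {n : ℕ} (σ : Equiv.Perm (Fin n)) (i : Fin n) :
    iotaHom n σ i.succ = (σ i).succ := by
  simp [iotaHom, Equiv.Perm.decomposeFin_symm_apply_succ]

lemma decomposeFin_symm_eq {n : ℕ} (p : Fin (n+1)) (σ : Equiv.Perm (Fin n)) :
    Equiv.Perm.decomposeFin.symm (p, σ) = Equiv.swap 0 p * iotaHom n σ := by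
  ext x
  refine Fin.cases ?_ ?_ x
  · simp [Equiv.Perm.decomposeFin_symm_apply_zero, iotaHom_apply_zero]
  · intro i
    simp [Equiv.Perm.decomposeFin_symm_apply_succ, iotaHom_apply_succ]

lemma iotaHom_swap {n : ℕ} (a b : Fin n) :
    iotaHom n (Equiv.swap a b) = Equiv.swap a.succ b.succ := by
  ext x
  refine Fin.cases ?_ ?_ x
  · rw [iotaHom_apply_zero]
    rw [Equiv.swap_apply_of_ne_of_ne (Fin.succ_ne_zero a).symm (Fin.succ_ne_zero b).symm]
  · intro i
    rw [iotaHom_apply_succ]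
    rcases eq_or_ne i a with rfl | ha
    · simp
    rcases eq_or_ne i b with rfl | hb
    · simp
    rw [Equiv.swap_apply_of_ne_of_ne ha hb,
      Equiv.swap_apply_of_ne_of_ne (fun h => ha (Fin.succ_injective _ h))
        (fun h => hb (Fin.succ_injective _ h))]

noncomputable def Xsum (k : ℕ) : MonoidAlgebra ℂ (Equiv.Perm (Fin k)) :=
  ∑ σ : Equiv.Perm (Fin k), MonoidAlgebra.single σ (1 : ℂ)

noncomputable def Xfix (n : ℕ) : MonoidAlgebra ℂ (Equiv.Perm (Fin (n+1))) :=
  ∑ σ : Equiv.Perm (Fin n), MonoidAlgebra.single (iotaHom n σ) (1 : ℂ)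

lemma absorb {n : ℕ} (ρ : Equiv.Perm (Fin n)) :
    MonoidAlgebra.single (iotaHom n ρ) (1 : ℂ) * Xfix n = Xfix n := by
  rw [Xfix, Finset.mul_sum]
  simp only [MonoidAlgebra.single_mul_single, one_mul, ← map_mul]
  exact Fintype.sum_equiv (Equiv.mulLeft ρ) _ _ (fun σ => rfl)

lemma absorb_fix {n : ℕ} (τ : Equiv.Perm (Fin (n+1))) (hτ : τ 0 = 0) :
    MonoidAlgebra.single τ (1 : ℂ) * Xfix n = Xfix n := by
  have h1 : Equiv.Perm.decomposeFin.symm (Equiv.Perm.decomposeFin τ) = τ :=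
    Equiv.Perm.decomposeFin.symm_apply_apply τ
  have h2 : (Equiv.Perm.decomposeFin τ).1 = 0 := by
    have := Equiv.Perm.decomposeFin_symm_apply_zero (Equiv.Perm.decomposeFin τ).1
      (Equiv.Perm.decomposeFin τ).2
    rw [Prod.mk.eta, h1, hτ] at this
    exact this.symm
  have h3 : τ = iotaHom n (Equiv.Perm.decomposeFin τ).2 := by
    conv_lhs => rw [← h1, ← Prod.mk.eta (p := Equiv.Perm.decomposeFin τ), h2]
    rw [decomposeFin_symm_eq, Equiv.swap_self]
    simp [← Equiv.Perm.one_def]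
  rw [h3, absorb]

lemma coset_eq {n : ℕ} (τ τ' : Equiv.Perm (Fin (n+1))) (h : τ 0 = τ' 0) :
    MonoidAlgebra.single τ (1 : ℂ) * Xfix n = MonoidAlgebra.single τ' (1 : ℂ) * Xfix n := by
  have : τ = τ' * (τ'⁻¹ * τ) := by group
  rw [this, ← one_mul (1 : ℂ), ← MonoidAlgebra.single_mul_single, mul_assoc,
    absorb_fix (τ'⁻¹ * τ) (by simp [Equiv.Perm.mul_apply, h]), one_mul]

lemma Xsum_succ (n : ℕ) :
    Xsum (n+1) = ∑ p : Fin (n+1), MonoidAlgebra.single (Equiv.swap 0 p) (1 : ℂ) * Xfix n := by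
  rw [Xsum]
  rw [Fintype.sum_equiv Equiv.Perm.decomposeFin
    (fun σ => MonoidAlgebra.single σ (1:ℂ))
    (fun pe => MonoidAlgebra.single (Equiv.Perm.decomposeFin.symm pe) (1:ℂ))
    (fun σ => by simp)]
  rw [Fintype.sum_prod_type]
  refine Finset.sum_congr rfl fun p _ => ?_
  rw [Xfix, Finset.mul_sum]
  refine Finset.sum_congr rfl fun ρ _ => ?_
  rw [MonoidAlgebra.single_mul_single, one_mul, decomposeFin_symm_eq]

lemma Rh_eq (k i : ℕ) (ξ : ℂ) (h : i + 1 < k) :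
    Rh k i ξ = MonoidAlgebra.single (Equiv.swap ⟨i, by omega⟩ ⟨i + 1, h⟩) (1:ℂ) + ξ⁻¹ • 1 :=
  dif_pos h

noncomputable def Ppart (n m : ℕ) : MonoidAlgebra ℂ (Equiv.Perm (Fin (n+1))) :=
  ((List.range (m+1)).map fun i => Rh (n+1) (m - i) ((n - m + i : ℕ) : ℂ)).prod

lemma Ppart_zero (n : ℕ) : Ppart n 0 = Rh (n+1) 0 ((n : ℕ) : ℂ) := by
  norm_num [Ppart, List.range_succ]

lemma Ppart_succ (n m : ℕ) (h : m + 1 ≤ n) :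
    Ppart n (m+1) = Rh (n+1) (m+1) ((n - (m+1) : ℕ) : ℂ) * Ppart n m := by
  rw [Ppart, List.range_succ_eq_map, List.map_cons, List.prod_cons, List.map_map]
  congr 1
  rw [Ppart]
  congr 1
  apply List.map_congr_left
  intro i _
  simp only [Function.comp_apply]
  have e1 : m + 1 - (i + 1) = m - i := by omega
  rw [e1]
  congr 1
  have e2 : (n - m : ℕ) = (n - (m+1) : ℕ) + 1 := by omega
  rw [e2]
  push_cast
  ring

lemma left_mul_coset {n : ℕ} (τ : Equiv.Perm (Fin (n+1))) (p : Fin (n+1)) :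
    MonoidAlgebra.single τ (1:ℂ) * (MonoidAlgebra.single (Equiv.swap 0 p) (1:ℂ) * Xfix n) =
      MonoidAlgebra.single (Equiv.swap 0 (τ p)) (1:ℂ) * Xfix n := by
  rw [← mul_assoc, MonoidAlgebra.single_mul_single, one_mul]
  apply coset_eq
  simp [Equiv.Perm.mul_apply]

noncomputable def Scos (n m : ℕ) : MonoidAlgebra ℂ (Equiv.Perm (Fin (n+1))) :=
  ∑ p ∈ Finset.univ.filter (fun p : Fin (n+1) => (p : ℕ) ≤ m),
    MonoidAlgebra.single (Equiv.swap 0 p) (1:ℂ) * Xfix n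

lemma Scos_zero (n : ℕ) : Scos n 0 = Xfix n := by
  rw [Scos]
  have : Finset.univ.filter (fun p : Fin (n+1) => (p : ℕ) ≤ 0) = {0} := by
    ext p
    simp only [Finset.mem_filter, Finset.mem_univ, true_and, Finset.mem_singleton, Fin.ext_iff, Nat.le_zero, Fin.val_zero]
  rw [this, Finset.sum_singleton]
  exact absorb_fix _ (by simp)

lemma Scos_succ (n m : ℕ) (h : m + 1 ≤ n) :
    Scos n (m+1) =
      MonoidAlgebra.single (Equiv.swap 0 (⟨m+1, by omega⟩ : Fin (n+1))) (1:ℂ) * Xfix n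
        + Scos n m := by
  rw [Scos, Scos]
  have : Finset.univ.filter (fun p : Fin (n+1) => (p : ℕ) ≤ m + 1) =
      insert (⟨m+1, by omega⟩ : Fin (n+1))
        (Finset.univ.filter (fun p : Fin (n+1) => (p : ℕ) ≤ m)) := by
    ext p
    simp [Fin.ext_iff]
    omega
  rw [this, Finset.sum_insert (by simp)]

lemma swap_mul_Scos (n m : ℕ) (h : m + 2 ≤ n) :
    MonoidAlgebra.single
        (Equiv.swap (⟨m+1, by omega⟩ : Fin (n+1)) (⟨m+1+1, by omega⟩ : Fin (n+1))) (1:ℂ)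
      * Scos n m = Scos n m := by
  rw [Scos, Finset.mul_sum]
  refine Finset.sum_congr rfl fun p hp => ?_
  rw [Finset.mem_filter] at hp
  rw [left_mul_coset]
  have : (Equiv.swap (⟨m+1, by omega⟩ : Fin (n+1)) (⟨m+1+1, by omega⟩ : Fin (n+1))) p = p := by
    apply Equiv.swap_apply_of_ne_of_ne <;>
      · rw [Ne, Fin.ext_iff]; simp; omega
  rw [this]

lemma claim (n : ℕ) : ∀ m, ∀ _hm : m + 1 ≤ n,
    Ppart n m * Xfix n =
      MonoidAlgebra.single (Equiv.swap 0 (⟨m+1, by omega⟩ : Fin (n+1))) (1:ℂ) * Xfix n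
        + ((n - m : ℕ) : ℂ)⁻¹ • Scos n m := by
  intro m
  induction m with
  | zero =>
    intro h
    rw [Ppart_zero, Rh_eq _ _ _ (by omega), add_mul, smul_mul_assoc, one_mul, Scos_zero]
    norm_num
  | succ m ih =>
    intro h
    have hm : m + 1 ≤ n := by omega
    rw [Ppart_succ n m hm, mul_assoc, ih hm, Rh_eq _ _ _ (by omega)]
    have hs : (Equiv.swap (⟨m+1, by omega⟩ : Fin (n+1)) (⟨m+1+1, by omega⟩ : Fin (n+1)))
        (⟨m+1, by omega⟩ : Fin (n+1)) = (⟨m+1+1, by omega⟩ : Fin (n+1)) :=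
      Equiv.swap_apply_left _ _
    simp only [mul_add, add_mul, smul_mul_assoc, one_mul, mul_smul_comm]
    rw [left_mul_coset, hs, swap_mul_Scos n m (by omega), Scos_succ n m hm]
    have ha : ((n - m : ℕ) : ℂ) ≠ 0 := Nat.cast_ne_zero.mpr (by omega)
    have hb : ((n - (m+1) : ℕ) : ℂ) ≠ 0 := Nat.cast_ne_zero.mpr (by omega)
    have hab : ((n - m : ℕ) : ℂ) = ((n - (m+1) : ℕ) : ℂ) + 1 := by
      have : (n - m : ℕ) = (n - (m+1) : ℕ) + 1 := by omega
      rw [this]; push_cast; ring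
    generalize hga : ((n - m : ℕ) : ℂ) = a at ha hab ⊢
    generalize hgb : ((n - (m+1) : ℕ) : ℂ) = b at hb hab ⊢
    match_scalars
    · ring
    · ring
    · rw [hab] at ha ⊢
      field_simp

lemma Bzero_mul (n : ℕ) (hn : 1 ≤ n) : Ppart n (n-1) * Xfix n = Xsum (n+1) := by
  rw [claim n (n-1) (by omega), Xsum_succ]
  have h1 : ((n - (n-1) : ℕ) : ℂ) = 1 := by
    have : (n - (n-1) : ℕ) = 1 := by omega
    rw [this, Nat.cast_one]
  rw [h1, inv_one, one_smul]
  rw [← Finset.sum_filter_add_sum_filter_not Finset.univ (fun p : Fin (n+1) => (p:ℕ) ≤ n-1)]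
  have h2 : Finset.univ.filter (fun p : Fin (n+1) => ¬ (p:ℕ) ≤ n-1) = {⟨n, by omega⟩} := by
    ext p
    simp [Fin.ext_iff]
    omega
  rw [h2, Finset.sum_singleton, ← Scos]
  have h3 : (⟨n-1+1, by omega⟩ : Fin (n+1)) = ⟨n, by omega⟩ := by
    rw [Fin.ext_iff]; simp; omega
  rw [h3]
  exact add_comm _ _

lemma map_Rh (n i : ℕ) (ξ : ℂ) (h : i + 1 < n) :
    MonoidAlgebra.mapDomainAlgHom ℂ ℂ (iotaHom n) (Rh n i ξ) = Rh (n+1) (i+1) ξ := by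
  rw [Rh_eq n i ξ h, Rh_eq (n+1) (i+1) ξ (by omega), map_add, map_smul, map_one]
  congr 1
  rw [MonoidAlgebra.mapDomainAlgHom_apply, MonoidAlgebra.mapDomain_single]
  congr 1
  rw [iotaHom_swap]
  congr 1

lemma map_Xsum (n : ℕ) :
    MonoidAlgebra.mapDomainAlgHom ℂ ℂ (iotaHom n) (Xsum n) = Xfix n := by
  rw [Xsum, map_sum, Xfix]
  refine Finset.sum_congr rfl fun σ _ => ?_
  rw [MonoidAlgebra.mapDomainAlgHom_apply, MonoidAlgebra.mapDomain_single]


lemma step (n : ℕ) :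
    ((List.range (n+1)).map fun a =>
      ((List.range (n+1-a)).map fun t => Rh (n+2) (n-t) ((t+1:ℕ):ℂ)).prod).prod
    = Ppart (n+1) n *
      MonoidAlgebra.mapDomainAlgHom ℂ ℂ (iotaHom (n+1))
        (((List.range n).map fun a =>
          ((List.range (n-a)).map fun t => Rh (n+1) (n-1-t) ((t+1:ℕ):ℂ)).prod).prod) := by
  rw [List.range_succ_eq_map, List.map_cons, List.prod_cons, List.map_map]
  congr 1
  · rw [Ppart, Nat.sub_zero]
    congr 1
    apply List.map_congr_left
    intro t ht
    rw [List.mem_range] at ht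
    congr 1
    have e : n + 1 - n = 1 := by omega
    rw [e]
    push_cast
    ring
  · rw [map_list_prod, List.map_map]
    congr 1
    apply List.map_congr_left
    intro a ha
    rw [List.mem_range] at ha
    simp only [Function.comp_apply]
    rw [map_list_prod, List.map_map]
    have hlen : n + 1 - (a+1) = n - a := by omega
    rw [hlen]
    congr 1
    apply List.map_congr_left
    intro t ht
    rw [List.mem_range] at ht
    simp only [Function.comp_apply]
    rw [map_Rh (n+1) (n-1-t) _ (by omega)]
    congr 1
    omega

theorem prod_eq : ∀ k : ℕ, ((List.range (k-1)).map fun a =>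
    ((List.range (k-1-a)).map fun t => Rh k (k-2-t) ((t+1:ℕ):ℂ)).prod).prod = Xsum k := by
  intro k
  match k with
  | 0 => simp [Xsum, MonoidAlgebra.one_def]
  | 1 => simp [Xsum, MonoidAlgebra.one_def]
  | (n+2) =>
    have ih := prod_eq (n+1)
    have h1 : n + 2 - 1 = n + 1 := by omega
    have h2 : ∀ t, n + 2 - 2 - t = n - t := fun t => by omega
    have h3 : n + 1 - 1 = n := by omega
    have h4 : ∀ t, n + 1 - 2 - t = n - 1 - t := fun t => by omega
    rw [h1]
    simp only [h2]
    simp only [h3, h4] at ih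
    rw [step n, ih, map_Xsum (n+1)]
    have := Bzero_mul (n+1) (by omega)
    simpa using this


/-- Jucys' fusion formula. In the group algebra `ℂ[S_k]`, the
symmetrizer `e_k = (1/k!) ∑_σ σ` factorizes as
`e_k = (1/k!) (Ř_{k-1}(1) ⋯ Ř_1(k-1)) ⋯ (Ř_{k-1}(1) Ř_{k-2}(2)) (Ř_{k-1}(1))`,
where `Ř` is written with 1-indexed simple transpositions as in the paper (so the
`1-indexed` `Ř_s` is `Rh (s-1)` here). -/
theorem statement9 (k : ℕ) :
    (k.factorial : ℂ)⁻¹ •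
        (∑ σ : Equiv.Perm (Fin k), MonoidAlgebra.single σ (1 : ℂ)) =
      (k.factorial : ℂ)⁻¹ •
        ((List.range (k - 1)).map fun a =>
            ((List.range (k - 1 - a)).map fun t =>
              Rh k (k - 2 - t) ((t + 1 : ℕ) : ℂ)).prod).prod := by
  rw [prod_eq k, Xsum]
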